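/- Suppose the family ⟨a^α_β : β < γ_α⟩ (for α a countable limit ordinal) witnesses C_s. Let A, B ⊆ ω₁ be disjoint sets such that E := A ∪ B is stationary and such that for every countable limit ordinal α ∈ E the following hold: if some β < γ_α satisfies that a^α_β ∩ A is infinite and a^α_β ∩ B is finite, then α ∈ B; and if some β < γ_α satisfies that a^α_β ∩ B is infinite and a^α_β ∩ A is finite, then α ∈ A. Then A and B are both stationary. -/

import Mathlib

noncomputable section

/-- The first uncountable ordinal. -/
def omega1 : Ordinal := (Cardinal.aleph 1).ord

/-- `C ⊆ ω₁` is club: unbounded in `ω₁` and closed (every limit `α < ω₁` with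
`sup (C ∩ α) = α` belongs to `C`). -/
def IsClub' (C : Set Ordinal) : Prop :=
  C ⊆ Set.Iio omega1 ∧
  (∀ α < omega1, ∃ β ∈ C, α < β) ∧
  (∀ α < omega1, Order.IsSuccLimit α → sSup (C ∩ Set.Iio α) = α → α ∈ C)

/-- `S ⊆ ω₁` is stationary: it meets every club subset of `ω₁`. -/
def IsStat (S : Set Ordinal) : Prop :=
  S ⊆ Set.Iio omega1 ∧ ∀ C, IsClub' C → (S ∩ C).Nonempty

/-- A run of the stationary set splitting game `SG`, coded by a pair of
disjoint subsets `A, B` of `ω₁` (the accepted set is `E = A ∪ B`). -/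
def SGRun (A B : Set Ordinal) : Prop :=
  A ⊆ Set.Iio omega1 ∧ B ⊆ Set.Iio omega1 ∧ Disjoint A B

/-- Split wins the run `(A, B)` if `A ∪ B` is nonstationary or both `A` and `B`
are stationary. -/
def SplitWins (A B : Set Ordinal) : Prop :=
  ¬ IsStat (A ∪ B) ∨ (IsStat A ∧ IsStat B)

/-- The run `(A, B)` is played according to Split's strategy `τ`
(`true` = put into `A`): for every accepted `α`, `α ∈ A` iff `τ` says so on the
position `(A ∩ α, B ∩ α)`. -/
def PlayedBySplit (τ : Ordinal → Set Ordinal → Set Ordinal → Bool)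
    (A B : Set Ordinal) : Prop :=
  ∀ α ∈ A ∪ B, (α ∈ A ↔ τ α (A ∩ Set.Iio α) (B ∩ Set.Iio α) = true)

/-- `τ` is a winning strategy for Split. -/
def SplitWinning (τ : Ordinal → Set Ordinal → Set Ordinal → Bool) : Prop :=
  ∀ A B, SGRun A B → PlayedBySplit τ A B → SplitWins A B

/-- The run `(A, B)` is played according to Unsplit's strategy `υ`
(`true` = accept): for every `α < ω₁`, `α` is accepted iff `υ` says so on the
position `(A ∩ α, B ∩ α)`. -/
def PlayedByUnsplit (υ : Ordinal → Set Ordinal → Set Ordinal → Bool)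
    (A B : Set Ordinal) : Prop :=
  ∀ α < omega1, (α ∈ A ∪ B ↔ υ α (A ∩ Set.Iio α) (B ∩ Set.Iio α) = true)

/-- `υ` is a winning strategy for Unsplit. -/
def UnsplitWinning (υ : Ordinal → Set Ordinal → Set Ordinal → Bool) : Prop :=
  ∀ A B, SGRun A B → PlayedByUnsplit υ A B → ¬ SplitWins A B

/-- A set of ordinals has order type `ω`. -/
def OTypeOmega (s : Set Ordinal) : Prop :=
  Ordinal.type ((· < ·) : s → s → Prop) = Ordinal.omega0

/-- The family `⟨a α β : β < γ α⟩` (for `α < ω₁` limit) witnesses `C_s`: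
each `a α β` is a cofinal subset of `α` of order type `ω`; the family is
`⊆`-decreasing mod finite in `β`; and for every club `C` and stationary `E`
some `a α β` with `α ∈ E` has `a α β \ C` finite and `a α β ∩ E` infinite. -/
def CsWitness (γ : Ordinal → Ordinal) (a : Ordinal → Ordinal → Set Ordinal) : Prop :=
  (∀ α, α < omega1 → Order.IsSuccLimit α →
    γ α < omega1 ∧
    ∀ β < γ α, a α β ⊆ Set.Iio α ∧ (∀ ξ < α, ∃ η ∈ a α β, ξ < η) ∧ OTypeOmega (a α β)) ∧
  (∀ α, α < omega1 → Order.IsSuccLimit α → ∀ β β', β < β' → β' < γ α → (a α β' \ a α β).Finite) ∧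
  (∀ C E : Set Ordinal, IsClub' C → IsStat E →
    ∃ α β, α < omega1 ∧ Order.IsSuccLimit α ∧ α ∈ E ∧ β < γ α ∧
      (a α β \ C).Finite ∧ (a α β ∩ E).Infinite)

/-- The principle `C_s`. -/
def Cs : Prop :=
  ∃ (γ : Ordinal.{0} → Ordinal.{0}) (a : Ordinal.{0} → Ordinal.{0} → Set Ordinal.{0}), CsWitness γ a

/-- The sequence `⟨σ α : α < ω₁⟩` witnesses `D_u`: it is a `◊`-sequence, and
for every `E ⊆ ω₁` there is a club `C` such that either every `α ∈ C` guessing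
`E` lies in `E`, or every `α ∈ C` guessing `E` lies outside `E`. -/
def DuWitness (σ : Ordinal → Set Ordinal) : Prop :=
  (∀ α < omega1, σ α ⊆ Set.Iio α) ∧
  (∀ A : Set Ordinal, A ⊆ Set.Iio omega1 →
    IsStat {α | α < omega1 ∧ A ∩ Set.Iio α = σ α}) ∧
  (∀ E : Set Ordinal, E ⊆ Set.Iio omega1 →
    ∃ C, IsClub' C ∧
      ((∀ α ∈ C, E ∩ Set.Iio α = σ α → α ∈ E) ∨
       (∀ α ∈ C, E ∩ Set.Iio α = σ α → α ∉ E)))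

/-- The principle `D_u`. -/
def Du : Prop := ∃ σ : Ordinal.{0} → Set Ordinal.{0}, DuWitness σ

open Set Ordinal

lemma csaux_sup_lt (f : ℕ → Ordinal) (hf : ∀ n, f n < omega1) : (⨆ n, f n) < omega1 := by
  apply Ordinal.iSup_lt_ord_lift ?_ hf
  rw [show omega1.cof = Cardinal.aleph 1 from Cardinal.isRegular_aleph_one.cof_eq]
  simpa using Cardinal.aleph0_lt_aleph_one

lemma csaux_club_inter {C D : Set Ordinal} (hC : IsClub' C) (hD : IsClub' D) :
    IsClub' (C ∩ D) := by
  obtain ⟨hC1, hC2, hC3⟩ := hC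
  obtain ⟨hD1, hD2, hD3⟩ := hD
  refine ⟨fun x hx => hC1 hx.1, ?_, ?_⟩
  · intro α hα
    have stepC : ∀ x : Iio omega1, ∃ y : Iio omega1, (y : Ordinal) ∈ C ∧ (x : Ordinal) < y := by
      rintro ⟨x, hx⟩
      obtain ⟨y, hyC, hxy⟩ := hC2 x hx
      exact ⟨⟨y, hC1 hyC⟩, hyC, hxy⟩
    have stepD : ∀ x : Iio omega1, ∃ y : Iio omega1, (y : Ordinal) ∈ D ∧ (x : Ordinal) < y := by
      rintro ⟨x, hx⟩
      obtain ⟨y, hyD, hxy⟩ := hD2 x hx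
      exact ⟨⟨y, hD1 hyD⟩, hyD, hxy⟩
    choose fC hfC1 hfC2 using stepC
    choose fD hfD1 hfD2 using stepD
    set F : ℕ → Iio omega1 := fun n => Nat.rec (fC ⟨α, hα⟩) (fun _ x => fC (fD x)) n with hF
    have hFC : ∀ n, (F n : Ordinal) ∈ C := by
      intro n
      cases n with
      | zero => exact hfC1 _
      | succ m => exact hfC1 _
    have hFD : ∀ n, (fD (F n) : Ordinal) ∈ D := fun n => hfD1 _
    have hlt1 : ∀ n, (F n : Ordinal) < fD (F n) := fun n => hfD2 _
    have hlt2 : ∀ n, (fD (F n) : Ordinal) < F (n + 1) := fun n => hfC2 _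
    set u : ℕ → Ordinal := fun n => (F n : Ordinal) with hu
    set s : Ordinal := ⨆ n, u n with hs
    have hbdd : BddAbove (Set.range u) := Ordinal.bddAbove_of_small (s := Set.range u)
    have hus : ∀ n, u n ≤ s := fun n => le_ciSup hbdd n
    have hmono : ∀ n, u n < u (n + 1) := fun n => (hlt1 n).trans (hlt2 n)
    have huslt : ∀ n, u n < s := fun n => lt_of_lt_of_le (hmono n) (hus (n + 1))
    have hds : ∀ n, (fD (F n) : Ordinal) < s := fun n => lt_of_lt_of_le (hlt2 n) (hus (n + 1))
    have hslt : s < omega1 := csaux_sup_lt u fun n => (F n).2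
    have hlim : Order.IsSuccLimit s := by
      rw [Ordinal.isSuccLimit_iff, Order.isSuccPrelimit_iff_succ_lt]
      constructor
      · intro h0
        exact absurd (h0 ▸ huslt 0) (not_lt_zero (a := u 0))
      · intro x hx
        rw [hs, Ordinal.lt_iSup_iff] at hx
        obtain ⟨n, hn⟩ := hx
        exact lt_of_le_of_lt (Order.succ_le_of_lt (hn.trans (hmono n))) (huslt (n + 1))
    have hsupmem : ∀ (X : Set Ordinal), (∀ n, ∃ y ∈ X ∩ Iio s, u n ≤ y) →
        sSup (X ∩ Iio s) = s := by
      intro X hX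
      apply le_antisymm
      · apply csSup_le
        · obtain ⟨y, hy, _⟩ := hX 0
          exact ⟨y, hy⟩
        · exact fun y hy => le_of_lt hy.2
      · rw [hs]
        apply ciSup_le
        intro n
        obtain ⟨y, hy, hny⟩ := hX n
        exact le_trans hny (le_csSup ⟨s, fun z hz => le_of_lt hz.2⟩ hy)
    have hsC : s ∈ C := hC3 s hslt hlim (hsupmem C fun n =>
      ⟨u n, ⟨hFC n, huslt n⟩, le_refl _⟩)
    have hsD : s ∈ D := hD3 s hslt hlim (hsupmem D fun n =>
      ⟨fD (F n), ⟨hFD n, hds n⟩, le_of_lt (hlt1 n)⟩)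
    exact ⟨s, ⟨hsC, hsD⟩, lt_of_lt_of_le (hfC2 ⟨α, hα⟩) ((hus 0).trans_eq rfl)⟩
  · intro β hβ hlimβ hsup
    have hne : ((C ∩ D) ∩ Iio β).Nonempty := by
      by_contra hne
      rw [Set.not_nonempty_iff_eq_empty] at hne
      rw [hne, csSup_empty] at hsup
      exact (Ordinal.isSuccLimit_iff.1 hlimβ).1 hsup.symm
    have hbddC : BddAbove (C ∩ Iio β) := ⟨β, fun z hz => le_of_lt hz.2⟩
    have hbddD : BddAbove (D ∩ Iio β) := ⟨β, fun z hz => le_of_lt hz.2⟩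
    obtain ⟨w, hw⟩ := id hne
    have hCβ : sSup (C ∩ Iio β) = β := by
      have hne1 : (C ∩ Iio β).Nonempty := ⟨w, hw.1.1, hw.2⟩
      have h1 : sSup (C ∩ Iio β) ≤ β := csSup_le hne1 fun y hy => le_of_lt hy.2
      have h2 : β ≤ sSup (C ∩ Iio β) :=
        calc β = sSup ((C ∩ D) ∩ Iio β) := hsup.symm
          _ ≤ sSup (C ∩ Iio β) := csSup_le_csSup hbddC hne fun x hx => ⟨hx.1.1, hx.2⟩
      exact le_antisymm h1 h2
    have hDβ : sSup (D ∩ Iio β) = β := by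
      have hne1 : (D ∩ Iio β).Nonempty := ⟨w, hw.1.2, hw.2⟩
      have h1 : sSup (D ∩ Iio β) ≤ β := csSup_le hne1 fun y hy => le_of_lt hy.2
      have h2 : β ≤ sSup (D ∩ Iio β) :=
        calc β = sSup ((C ∩ D) ∩ Iio β) := hsup.symm
          _ ≤ sSup (D ∩ Iio β) := csSup_le_csSup hbddD hne fun x hx => ⟨hx.1.2, hx.2⟩
      exact le_antisymm h1 h2
    exact ⟨hC3 β hβ hlimβ hCβ, hD3 β hβ hlimβ hDβ⟩


lemma csaux_statA
    (γ : Ordinal → Ordinal) (a : Ordinal → Ordinal → Set Ordinal)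
    (hw : CsWitness γ a)
    (A B : Set Ordinal) (hA : A ⊆ Set.Iio omega1)
    (hstat : IsStat (A ∪ B))
    (h2 : ∀ α, α < omega1 → Order.IsSuccLimit α → α ∈ A ∪ B →
      (∃ β < γ α, (a α β ∩ B).Infinite ∧ (a α β ∩ A).Finite) → α ∈ A) :
    IsStat A := by
  refine ⟨hA, ?_⟩
  by_contra hcon
  push_neg at hcon
  obtain ⟨C, hCclub, hCne⟩ := hcon
  have hE' : IsStat ((A ∪ B) ∩ C) := by
    refine ⟨fun x hx => hstat.1 hx.1, fun D hD => ?_⟩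
    obtain ⟨x, hx1, hx2⟩ := hstat.2 (C ∩ D) (csaux_club_inter hCclub hD)
    exact ⟨x, ⟨hx1, hx2.1⟩, hx2.2⟩
  obtain ⟨α, β, hα1, hα2, hα3, hβ, hfin, hinf⟩ := hw.2.2 C _ hCclub hE'
  have hAfin : (a α β ∩ A).Finite := by
    refine hfin.subset fun x hx => ⟨hx.1, fun hxC => ?_⟩
    have : x ∈ A ∩ C := ⟨hx.2, hxC⟩
    rw [hCne] at this
    exact this
  have hBinf : (a α β ∩ B).Infinite := by
    intro hBfin
    apply hinf
    refine ((hAfin.union hBfin).subset fun x hx => ?_)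
    rcases hx.2.1 with h | h
    · exact Or.inl ⟨hx.1, h⟩
    · exact Or.inr ⟨hx.1, h⟩
  have hαA : α ∈ A := h2 α hα1 hα2 hα3.1 ⟨β, hβ, hBinf, hAfin⟩
  have : α ∈ A ∩ C := ⟨hαA, hα3.2⟩
  rw [hCne] at this
  exact this

/-- If `⟨a α β : β < γ α⟩` witnesses `C_s`, `A, B` are disjoint with `E = A ∪ B`
stationary, and for every countable limit `α ∈ E`: if some `a α β` meets `A`
infinitely and `B` finitely then `α ∈ B`, and if some `a α β` meets `B`
infinitely and `A` finitely then `α ∈ A`; then `A` and `B` are both stationary. -/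
theorem cs_strategy_produces_stationary_pieces
    (γ : Ordinal → Ordinal) (a : Ordinal → Ordinal → Set Ordinal)
    (hw : CsWitness γ a)
    (A B : Set Ordinal) (hA : A ⊆ Set.Iio omega1) (hB : B ⊆ Set.Iio omega1)
    (hdisj : Disjoint A B) (hstat : IsStat (A ∪ B))
    (h1 : ∀ α, α < omega1 → Order.IsSuccLimit α → α ∈ A ∪ B →
      (∃ β < γ α, (a α β ∩ A).Infinite ∧ (a α β ∩ B).Finite) → α ∈ B)
    (h2 : ∀ α, α < omega1 → Order.IsSuccLimit α → α ∈ A ∪ B →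
      (∃ β < γ α, (a α β ∩ B).Infinite ∧ (a α β ∩ A).Finite) → α ∈ A) :
    IsStat A ∧ IsStat B := by
  constructor
  · exact csaux_statA γ a hw A B hA hstat h2
  · apply csaux_statA γ a hw B A hB
    · rwa [Set.union_comm]
    · intro α h1' h2' h3' h4'
      exact h1 α h1' h2' (Set.union_comm B A ▸ h3')
        (h4'.imp fun β hb => ⟨hb.1, hb.2.1, hb.2.2⟩)

end
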